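/- For nonnegative finite measures μ, ν on ℝ^d, the extended 1-Wasserstein distance W̄₁(μ,ν) (defined via adding a cemetery point and padding the smaller mass by a Dirac at the cemetery, with ground metric |x−y|∧1 on ℝ^d and distance to the cemetery equal to (|x−x₀|∧1)+1) is equivalent to the bounded Lipschitz distance d: (1/2)·d(μ,ν) ≤ W̄₁(μ,ν) ≤ 2·d(μ,ν). -/

import Mathlib

open MeasureTheory

/-- The bounded Lipschitz distance on (nonnegative, finite) Borel measures on ℝ^d. -/
noncomputable def blDist {d : ℕ} (μ ν : Measure (EuclideanSpace ℝ (Fin d))) : ℝ :=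
  sSup {r : ℝ | ∃ f : EuclideanSpace ℝ (Fin d) → ℝ,
    (∀ x, |f x| ≤ 1) ∧ LipschitzWith 1 f ∧ r = |∫ x, f x ∂μ - ∫ x, f x ∂ν|}

/-- The extended 1-Wasserstein distance `W̄₁(μ,ν)` on nonnegative finite measures,
expressed through its Kantorovich dual formulation: the supremum over functions `f̄`
that are 1-Lipschitz on the extended space `ℝ^d ∪ {∂}`, where the ground metric on ℝ^d
is `|x−y| ∧ 1` and the distance to the cemetery `∂` is `(|x−x₀| ∧ 1) + 1`
(here `a = f̄(∂)`), of `|∫ (f̄(x) − f̄(∂)) d(μ−ν)|`. -/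
noncomputable def extW1 {d : ℕ} (x₀ : EuclideanSpace ℝ (Fin d))
    (μ ν : Measure (EuclideanSpace ℝ (Fin d))) : ℝ :=
  sSup {r : ℝ | ∃ (f : EuclideanSpace ℝ (Fin d) → ℝ) (a : ℝ),
    (∀ x y, |f x - f y| ≤ min (dist x y) 1) ∧
    (∀ x, |f x - a| ≤ min (dist x x₀) 1 + 1) ∧
    r = |(∫ x, f x ∂μ - ∫ x, f x ∂ν) -
          a * ((μ Set.univ).toReal - (ν Set.univ).toReal)|}

private lemma aux_int {d : ℕ} (μ : Measure (EuclideanSpace ℝ (Fin d))) [IsFiniteMeasure μ]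
    {f : EuclideanSpace ℝ (Fin d) → ℝ} (a : ℝ)
    (h1 : ∀ x y, |f x - f y| ≤ min (dist x y) 1)
    (h2 : ∀ x, |f x - a| ≤ 2) :
    Integrable f μ ∧ ∫ x, f x ∂μ - a * (μ Set.univ).toReal = ∫ x, (f x - a) ∂μ := by
  have hlip : LipschitzWith 1 f := LipschitzWith.of_dist_le_mul fun x y => by
    rw [Real.dist_eq]
    calc |f x - f y| ≤ min (dist x y) 1 := h1 x y
    _ ≤ dist x y := min_le_left _ _
    _ = 1 * dist x y := (one_mul _).symm
  have hb : ∀ x, ‖f x‖ ≤ |a| + 2 := fun x => by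
    have h := h2 x
    have : |f x| ≤ |f x - a| + |a| := by
      calc |f x| = |(f x - a) + a| := by ring_nf
      _ ≤ |f x - a| + |a| := abs_add_le _ _
    rw [Real.norm_eq_abs]; linarith
  have hint : Integrable f μ :=
    (integrable_const (|a| + 2)).mono' hlip.continuous.aestronglyMeasurable
      (Filter.Eventually.of_forall fun x => hb x)
  refine ⟨hint, ?_⟩
  rw [integral_sub hint (integrable_const a), integral_const]
  simp [smul_eq_mul, mul_comm]
  exact Or.inl rfl

private lemma abs_integral_sub_le {d : ℕ} (μ ν : Measure (EuclideanSpace ℝ (Fin d)))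
    [IsFiniteMeasure μ] [IsFiniteMeasure ν] {f : EuclideanSpace ℝ (Fin d) → ℝ} {C : ℝ}
    (hb : ∀ x, |f x| ≤ C) :
    |∫ x, f x ∂μ - ∫ x, f x ∂ν| ≤ C * (μ Set.univ).toReal + C * (ν Set.univ).toReal := by
  have h1 : ‖∫ x, f x ∂μ‖ ≤ C * (μ Set.univ).toReal :=
    norm_integral_le_of_norm_le_const (Filter.Eventually.of_forall fun x => by simpa using hb x)
  have h2 : ‖∫ x, f x ∂ν‖ ≤ C * (ν Set.univ).toReal :=
    norm_integral_le_of_norm_le_const (Filter.Eventually.of_forall fun x => by simpa using hb x)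
  calc |∫ x, f x ∂μ - ∫ x, f x ∂ν| ≤ |∫ x, f x ∂μ| + |∫ x, f x ∂ν| := abs_sub _ _
  _ ≤ C * (μ Set.univ).toReal + C * (ν Set.univ).toReal :=
    add_le_add (by simpa using h1) (by simpa using h2)

/-- the extended 1-Wasserstein distance is equivalent to the bounded
Lipschitz distance: `(1/2)·d(μ,ν) ≤ W̄₁(μ,ν) ≤ 2·d(μ,ν)`. -/
theorem extW1_equiv_blDist {d : ℕ} (x₀ : EuclideanSpace ℝ (Fin d))
    (μ ν : Measure (EuclideanSpace ℝ (Fin d)))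
    [IsFiniteMeasure μ] [IsFiniteMeasure ν] :
    (1 / 2) * blDist μ ν ≤ extW1 x₀ μ ν ∧ extW1 x₀ μ ν ≤ 2 * blDist μ ν := by
  set S : Set ℝ := {r : ℝ | ∃ f : EuclideanSpace ℝ (Fin d) → ℝ,
    (∀ x, |f x| ≤ 1) ∧ LipschitzWith 1 f ∧ r = |∫ x, f x ∂μ - ∫ x, f x ∂ν|} with hS
  set T : Set ℝ := {r : ℝ | ∃ (f : EuclideanSpace ℝ (Fin d) → ℝ) (a : ℝ),
    (∀ x y, |f x - f y| ≤ min (dist x y) 1) ∧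
    (∀ x, |f x - a| ≤ min (dist x x₀) 1 + 1) ∧
    r = |(∫ x, f x ∂μ - ∫ x, f x ∂ν) -
          a * ((μ Set.univ).toReal - (ν Set.univ).toReal)|} with hT
  have hblS : blDist μ ν = sSup S := rfl
  have hexT : extW1 x₀ μ ν = sSup T := rfl
  -- nonemptiness
  have h0S : (0:ℝ) ∈ S := ⟨fun _ => 0, fun x => by norm_num,
    (LipschitzWith.const 0).weaken zero_le_one, by simp⟩
  have h0T : (0:ℝ) ∈ T := by
    refine ⟨fun _ => 0, 0, fun x y => by
        simpa using le_min dist_nonneg zero_le_one, fun x => ?_, by simp⟩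
    have h : (0:ℝ) ≤ min (dist x x₀) 1 := le_min dist_nonneg zero_le_one
    simp only [sub_self, abs_zero]
    linarith
  -- boundedness
  have hS_bdd : BddAbove S := by
    refine ⟨(μ Set.univ).toReal + (ν Set.univ).toReal, ?_⟩
    rintro r ⟨f, hb, _, hr⟩
    rw [hr]
    simpa using abs_integral_sub_le μ ν hb
  have hT_bdd : BddAbove T := by
    refine ⟨2 * (μ Set.univ).toReal + 2 * (ν Set.univ).toReal, ?_⟩
    rintro r ⟨f, a, h1, h2, hr⟩
    have h2' : ∀ x, |f x - a| ≤ 2 := fun x => by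
      have := min_le_right (dist x x₀) 1
      have := h2 x
      linarith
    obtain ⟨_, eqμ⟩ := aux_int μ a h1 h2'
    obtain ⟨_, eqν⟩ := aux_int ν a h1 h2'
    have hr' : r = |∫ x, (f x - a) ∂μ - ∫ x, (f x - a) ∂ν| := by
      rw [hr, ← eqμ, ← eqν]
      congr 1; ring
    rw [hr']
    exact abs_integral_sub_le μ ν h2'
  have hbl_nonneg : (0:ℝ) ≤ sSup S := le_csSup hS_bdd h0S
  have hex_nonneg : (0:ℝ) ≤ sSup T := le_csSup hT_bdd h0T
  constructor
  · -- (1/2) * blDist ≤ extW1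
    rw [hblS, hexT]
    have key : sSup S ≤ 2 * sSup T := by
      apply Real.sSup_le _ (by linarith)
      rintro r ⟨f, hb, hl, hr⟩
      have hmem : r / 2 ∈ T := by
        refine ⟨fun x => f x / 2, 0, fun x y => ?_, fun x => ?_, ?_⟩
        · have hd : |f x - f y| ≤ dist x y := by
            have h := hl.dist_le_mul x y
            rw [Real.dist_eq] at h
            simpa using h
          have h2 : |f x - f y| ≤ 2 := by
            have h3 := hb x; have h4 := hb y
            have := abs_sub (f x) (f y)
            linarith
          show |f x / 2 - f y / 2| ≤ min (dist x y) 1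
          rw [← sub_div, abs_div, abs_two]
          refine le_min ?_ ?_
          · have := dist_nonneg (x := x) (y := y)
            linarith
          · linarith
        · have hmin : (0:ℝ) ≤ min (dist x x₀) 1 := le_min dist_nonneg zero_le_one
          have := hb x
          show |f x / 2 - 0| ≤ min (dist x x₀) 1 + 1
          rw [sub_zero, abs_div, abs_two]
          linarith
        · show r / 2 = |(∫ x, f x / 2 ∂μ) - (∫ x, f x / 2 ∂ν) -
            0 * ((μ Set.univ).toReal - (ν Set.univ).toReal)|
          rw [hr, integral_div, integral_div]
          rw [zero_mul, sub_zero, ← sub_div, abs_div, abs_two]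
      have := le_csSup hT_bdd hmem
      linarith
    linarith
  · -- extW1 ≤ 2 * blDist
    rw [hblS, hexT]
    apply Real.sSup_le _ (by linarith)
    rintro r ⟨f, a, h1, h2, hr⟩
    have h2' : ∀ x, |f x - a| ≤ 2 := fun x => by
      have := min_le_right (dist x x₀) 1
      have := h2 x
      linarith
    obtain ⟨_, eqμ⟩ := aux_int μ a h1 h2'
    obtain ⟨_, eqν⟩ := aux_int ν a h1 h2'
    have hmem : |∫ x, (f x - a) / 2 ∂μ - ∫ x, (f x - a) / 2 ∂ν| ∈ S := by
      refine ⟨fun x => (f x - a) / 2, fun x => ?_, ?_, rfl⟩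
      · have := h2' x
        rw [abs_div, abs_two]
        linarith
      · apply LipschitzWith.of_dist_le_mul
        intro x y
        simp only [NNReal.coe_one, one_mul, Real.dist_eq]
        have : (f x - a) / 2 - (f y - a) / 2 = (f x - f y) / 2 := by ring
        rw [this, abs_div, abs_two]
        have h := h1 x y
        have := min_le_left (dist x y) 1
        have := dist_nonneg (x := x) (y := y)
        linarith
    have hval : r = 2 * |∫ x, (f x - a) / 2 ∂μ - ∫ x, (f x - a) / 2 ∂ν| := by
      rw [hr, integral_div, integral_div, ← eqμ, ← eqν, ← sub_div, abs_div, abs_two]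
      rw [show (∫ x, f x ∂μ - a * (μ Set.univ).toReal) -
          (∫ x, f x ∂ν - a * (ν Set.univ).toReal) =
          (∫ x, f x ∂μ - ∫ x, f x ∂ν) -
            a * ((μ Set.univ).toReal - (ν Set.univ).toReal) by ring]
      ring
    rw [hval]
    have := le_csSup hS_bdd hmem
    linarith
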